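/- For any graph G there exist a maximal spanning forest F and an orientation 𝒪₁ of G such that ⟨x_i, e_j⟩ ∈ {0,1} for every fundamental cut vector x_i ∈ B_𝒞 and every edge e_j ∈ E(G), and an orientation 𝒪₂ of G (with the same forest F) such that ⟨x_i, e_j⟩ ∈ {0,1} for every fundamental cycle vector x_i ∈ B_ℱ and every edge e_j ∈ E(G). -/

import Mathlib

set_option linter.unusedSectionVars false

open Matrix BigOperators

namespace Greene

/-- A rational number is an integer. -/
def isInt (q : ℚ) : Prop := ∃ m : ℤ, q = (m : ℚ)

section LatticeDefs

variable {ι : Type} [Fintype ι] [DecidableEq ι]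
variable {ι' : Type} [Fintype ι'] [DecidableEq ι']

/-- The bilinear form on `ι → ℚ` with (integral) Gram matrix `B`. -/
def qform (B : Matrix ι ι ℤ) (x y : ι → ℚ) : ℚ :=
  x ⬝ᵥ ((B.map (Int.cast : ℤ → ℚ)) *ᵥ y)

/-- The set of integer vectors: the standard lattice inside `ι → ℚ`. -/
def intVecs (ι : Type) [Fintype ι] [DecidableEq ι] : Set (ι → ℚ) :=
  {x | ∀ i, isInt (x i)}

lemma qform_zero_left (B : Matrix ι ι ℤ) (y : ι → ℚ) : qform B 0 y = 0 :=
  zero_dotProduct _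

lemma qform_add_left (B : Matrix ι ι ℤ) (x x' y : ι → ℚ) :
    qform B (x + x') y = qform B x y + qform B x' y := add_dotProduct _ _ _

lemma qform_neg_left (B : Matrix ι ι ℤ) (x y : ι → ℚ) :
    qform B (-x) y = -qform B x y := neg_dotProduct _ _

/-- The dual lattice `S* = {x ∈ span_ℚ S | ⟨x,y⟩ ∈ ℤ for all y ∈ S}`. -/
def dualOf (B : Matrix ι ι ℤ) (S : Set (ι → ℚ)) : AddSubgroup (ι → ℚ) where
  carrier := {x | x ∈ Submodule.span ℚ S ∧ ∀ y ∈ S, isInt (qform B x y)}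
  zero_mem' := ⟨Submodule.zero_mem _, fun y _ => ⟨0, by simp [qform_zero_left]⟩⟩
  add_mem' := by
    intro a b ha hb
    refine ⟨Submodule.add_mem _ ha.1 hb.1, fun y hy => ?_⟩
    obtain ⟨m, hm⟩ := ha.2 y hy
    obtain ⟨m', hm'⟩ := hb.2 y hy
    exact ⟨m + m', by rw [qform_add_left, hm, hm']; push_cast; ring⟩
  neg_mem' := by
    intro a ha
    refine ⟨Submodule.neg_mem _ ha.1, fun y hy => ?_⟩
    obtain ⟨m, hm⟩ := ha.2 y hy
    exact ⟨-m, by rw [qform_neg_left, hm]; push_cast; ring⟩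

/-- Characteristic covectors: `χ ∈ S*` with `⟨χ,y⟩ ≡ ⟨y,y⟩ (mod 2)` for all `y ∈ S`. -/
def CharOf (B : Matrix ι ι ℤ) (S : Set (ι → ℚ)) : Set (ι → ℚ) :=
  {χ | χ ∈ dualOf B S ∧ ∀ y ∈ S, ∃ m : ℤ, qform B χ y - qform B y y = 2 * (m : ℚ)}

/-- Two covectors are in the same class mod `2S`. -/
def SameClass (S : Set (ι → ℚ)) (χ χ' : ι → ℚ) : Prop :=
  ∃ y ∈ S, χ' = χ + (2 : ℚ) • y

/-- Short characteristic covectors: minimal norm in their class mod `2S`. -/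
def ShortOf (B : Matrix ι ι ℤ) (S : Set (ι → ℚ)) : Set (ι → ℚ) :=
  {χ | χ ∈ CharOf B S ∧ ∀ χ' ∈ CharOf B S, SameClass S χ χ' → qform B χ χ ≤ qform B χ' χ'}

/-- Rank of a lattice: dimension of its rational span. -/
noncomputable def rkOf (S : Set (ι → ℚ)) : ℕ := Module.finrank ℚ (Submodule.span ℚ S)

/-- The lattice `S` sitting inside its dual. -/
def latIn (B : Matrix ι ι ℤ) (S : Set (ι → ℚ)) : AddSubgroup (dualOf B S) :=
  AddSubgroup.closure {x | (x : ι → ℚ) ∈ S}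

/-- The discriminant group `S*/S`. -/
def disc (B : Matrix ι ι ℤ) (S : Set (ι → ℚ)) : Type :=
  dualOf B S ⧸ latIn B S

noncomputable instance (B : Matrix ι ι ℤ) (S : Set (ι → ℚ)) : AddCommGroup (disc B S) :=
  inferInstanceAs (AddCommGroup (dualOf B S ⧸ latIn B S))

/-- The class of a dual vector in the discriminant group. -/
def dmk (B : Matrix ι ι ℤ) (S : Set (ι → ℚ)) {x : ι → ℚ} (hx : x ∈ dualOf B S) :
    disc B S := QuotientAddGroup.mk (⟨x, hx⟩ : dualOf B S)

/-- `S` is an additive subgroup (a sublattice, when contained in a lattice). -/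
def IsLat (S : Set (ι → ℚ)) : Prop :=
  (0 : ι → ℚ) ∈ S ∧ ∀ x ∈ S, ∀ y ∈ S, x - y ∈ S

/-- The form is integer valued on `S`. -/
def IntegralOn (B : Matrix ι ι ℤ) (S : Set (ι → ℚ)) : Prop :=
  ∀ x ∈ S, ∀ y ∈ S, isInt (qform B x y)

/-- Unimodularity: the dual lattice equals the lattice. -/
def UnimodularOn (B : Matrix ι ι ℤ) (S : Set (ι → ℚ)) : Prop :=
  ((dualOf B S : AddSubgroup (ι → ℚ)) : Set (ι → ℚ)) = S

/-- Positive definiteness of the form on the span of `S`. -/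
def PosDefOn (B : Matrix ι ι ℤ) (S : Set (ι → ℚ)) : Prop :=
  ∀ x ∈ Submodule.span ℚ S, x ≠ 0 → 0 < qform B x x

/-- Orthogonality of two sublattices. -/
def OrthogonalSets (B : Matrix ι ι ℤ) (S T : Set (ι → ℚ)) : Prop :=
  ∀ x ∈ S, ∀ y ∈ T, qform B x y = 0

/-- `S, T` are complementary sublattices of `L`: orthogonal with ranks summing to `rk L`. -/
noncomputable def ComplementaryIn (B : Matrix ι ι ℤ) (L S T : Set (ι → ℚ)) : Prop :=
  OrthogonalSets B S T ∧ rkOf S + rkOf T = rkOf L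

/-- `S ⊆ L` is a primitive sublattice: the restriction map `L* → S*` surjects. -/
def PrimitiveIn (B : Matrix ι ι ℤ) (L S : Set (ι → ℚ)) : Prop :=
  ∀ x ∈ dualOf B S, ∃ z ∈ dualOf B L, ∀ u ∈ S, qform B z u = qform B x u

/-- `s` is the signature of the form restricted to the span of `S` (Sylvester form). -/
def IsSignatureOf (B : Matrix ι ι ℤ) (S : Set (ι → ℚ)) (s : ℤ) : Prop :=
  ∃ (p q : ℕ) (v : Fin (p + q) → (ι → ℚ)),
    (∀ i, v i ∈ Submodule.span ℚ S) ∧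
    Submodule.span ℚ (Set.range v) = Submodule.span ℚ S ∧
    LinearIndependent ℚ v ∧
    (∀ i j, i ≠ j → qform B (v i) (v j) = 0) ∧
    (∀ i : Fin (p + q),
      if (i : ℕ) < p then 0 < qform B (v i) (v i) else qform B (v i) (v i) < 0) ∧
    s = (p : ℤ) - (q : ℤ)

/-- `S` admits an orthonormal basis of `n` elements, i.e. `S ≅ ℤⁿ`. -/
def HasOrthonormalBasis (B : Matrix ι ι ℤ) (S : Set (ι → ℚ)) (n : ℕ) : Prop :=
  ∃ v : Fin n → (ι → ℚ), (∀ i, v i ∈ S) ∧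
    (∀ i j, qform B (v i) (v j) = if i = j then 1 else 0) ∧
    (∀ x ∈ S, ∃ c : Fin n → ℤ, x = ∑ i, (c i : ℚ) • v i)

/-- Isomorphism of lattices: an additive bijection preserving the forms. -/
def LatIso (B : Matrix ι ι ℤ) (S : Set (ι → ℚ)) (B' : Matrix ι' ι' ℤ) (S' : Set (ι' → ℚ)) :
    Prop :=
  ∃ f : (ι → ℚ) → (ι' → ℚ), Set.BijOn f S S' ∧
    (∀ x ∈ S, ∀ y ∈ S, f (x + y) = f x + f y) ∧
    (∀ x ∈ S, ∀ y ∈ S, qform B' (f x) (f y) = qform B x y)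

/-- An isomorphism of the torsors `C(S₁) → C(S₂)` (given on representatives by `Φ`),
covering the group isomorphism `ψ` of discriminant groups. -/
def TorsorMapIso (B₁ : Matrix ι ι ℤ) (S₁ : Set (ι → ℚ))
    (B₂ : Matrix ι' ι' ℤ) (S₂ : Set (ι' → ℚ))
    (Φ : (ι → ℚ) → (ι' → ℚ)) (ψ : disc B₁ S₁ ≃+ disc B₂ S₂) : Prop :=
  (∀ χ ∈ CharOf B₁ S₁, Φ χ ∈ CharOf B₂ S₂) ∧
  (∀ χ ∈ CharOf B₁ S₁, ∀ χ' ∈ CharOf B₁ S₁,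
    (SameClass S₁ χ χ' ↔ SameClass S₂ (Φ χ) (Φ χ'))) ∧
  (∀ μ ∈ CharOf B₂ S₂, ∃ χ ∈ CharOf B₁ S₁, SameClass S₂ (Φ χ) μ) ∧
  (∀ χ ∈ CharOf B₁ S₁, ∀ χ' ∈ CharOf B₁ S₁,
    ∀ (x : ι → ℚ) (y : ι' → ℚ) (hx : x ∈ dualOf B₁ S₁) (hy : y ∈ dualOf B₂ S₂),
      χ' = χ + (2 : ℚ) • x → Φ χ' = Φ χ + (2 : ℚ) • y →
      ψ (dmk B₁ S₁ hx) = dmk B₂ S₂ hy)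

/-- Compatibility of `Φ` with the `d`-invariants: `d₂([Φ χ]) = ε · d₁([χ])`,
where `d` is the minimum of `(|χ'|² - rk)/4` over the class. -/
noncomputable def DCompat (B₁ : Matrix ι ι ℤ) (S₁ : Set (ι → ℚ))
    (B₂ : Matrix ι' ι' ℤ) (S₂ : Set (ι' → ℚ))
    (ε : ℚ) (Φ : (ι → ℚ) → (ι' → ℚ)) : Prop :=
  ∀ χ ∈ CharOf B₁ S₁, ∀ q : ℚ,
    IsLeast {t | ∃ χ' ∈ CharOf B₁ S₁, SameClass S₁ χ χ' ∧
      t = (qform B₁ χ' χ' - (rkOf S₁ : ℚ)) / 4} q →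
    IsLeast {t | ∃ μ ∈ CharOf B₂ S₂, SameClass S₂ (Φ χ) μ ∧
      t = (qform B₂ μ μ - (rkOf S₂ : ℚ)) / 4} (ε * q)

/-- Compatibility of `Φ` with the `ρ`-invariants: `ρ₂([Φ χ]) ≡ ε · ρ₁([χ]) (mod 2)`. -/
def RhoCompat (B₁ : Matrix ι ι ℤ) (S₁ : Set (ι → ℚ))
    (B₂ : Matrix ι' ι' ℤ) (S₂ : Set (ι' → ℚ))
    (ε : ℚ) (Φ : (ι → ℚ) → (ι' → ℚ)) : Prop :=
  ∀ χ ∈ CharOf B₁ S₁, ∀ s₁ s₂ : ℤ, IsSignatureOf B₁ S₁ s₁ → IsSignatureOf B₂ S₂ s₂ →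
    ∃ m : ℤ, (qform B₂ (Φ χ) (Φ χ) - (s₂ : ℚ)) / 4 - ε * ((qform B₁ χ χ - (s₁ : ℚ)) / 4)
      = 2 * (m : ℚ)

/-- The `d`-invariants `(C(S₁), d₁)` and `(C(S₂), ε·d₂)` are isomorphic. -/
noncomputable def DIso (B₁ : Matrix ι ι ℤ) (S₁ : Set (ι → ℚ))
    (B₂ : Matrix ι' ι' ℤ) (S₂ : Set (ι' → ℚ)) (ε : ℚ) : Prop :=
  ∃ (Φ : (ι → ℚ) → (ι' → ℚ)) (ψ : disc B₁ S₁ ≃+ disc B₂ S₂),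
    TorsorMapIso B₁ S₁ B₂ S₂ Φ ψ ∧ DCompat B₁ S₁ B₂ S₂ ε Φ

end LatticeDefs

/-- An abstract integral lattice, presented by its Gram matrix. -/
structure IntLattice where
  n : ℕ
  B : Matrix (Fin n) (Fin n) ℤ
  symm : B.IsSymm
  nondeg : B.det ≠ 0

/-- The Gram matrix of the orthogonal direct sum `Λ₁ ⊥ Λ₂`. -/
def glueGram (L₁ L₂ : IntLattice) :
    Matrix (Fin L₁.n ⊕ Fin L₂.n) (Fin L₁.n ⊕ Fin L₂.n) ℤ :=
  Matrix.fromBlocks L₁.B 0 0 L₂.B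

/-- The glue lattice `Λ₁ ⊕_ψ Λ₂ = {x + y ∈ Λ₁* ⊕ Λ₂* : ψ(x̄) = ȳ}`. -/
def glueSet (L₁ L₂ : IntLattice)
    (ψ : disc L₁.B (intVecs (Fin L₁.n)) ≃+ disc L₂.B (intVecs (Fin L₂.n))) :
    Set (Fin L₁.n ⊕ Fin L₂.n → ℚ) :=
  {w | ∃ (h₁ : (w ∘ Sum.inl) ∈ dualOf L₁.B (intVecs (Fin L₁.n)))
        (h₂ : (w ∘ Sum.inr) ∈ dualOf L₂.B (intVecs (Fin L₂.n))),
        ψ (dmk _ _ h₁) = dmk _ _ h₂}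

/-- `Λ₁` embedded in the first factor of `Λ₁* ⊕ Λ₂*`. -/
def inlLat (L₁ L₂ : IntLattice) : Set (Fin L₁.n ⊕ Fin L₂.n → ℚ) :=
  {w | (w ∘ Sum.inl) ∈ intVecs (Fin L₁.n) ∧ w ∘ Sum.inr = 0}

/-- `Λ₂` embedded in the second factor of `Λ₁* ⊕ Λ₂*`. -/
def inrLat (L₁ L₂ : IntLattice) : Set (Fin L₁.n ⊕ Fin L₂.n → ℚ) :=
  {w | (w ∘ Sum.inr) ∈ intVecs (Fin L₂.n) ∧ w ∘ Sum.inl = 0}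

/-- Stabilization `S ⊕ ℤᵏ`. -/
def stabSet {ι : Type} [Fintype ι] [DecidableEq ι] (S : Set (ι → ℚ)) (k : ℕ) :
    Set (ι ⊕ Fin k → ℚ) :=
  {w | (w ∘ Sum.inl) ∈ S ∧ ∀ j, isInt (w (Sum.inr j))}

/-- A finite loopless multigraph, with a reference orientation of each edge. -/
structure MultiGraph where
  nV : ℕ
  nE : ℕ
  hd : Fin nE → Fin nV
  tl : Fin nE → Fin nV
  loopless : ∀ e, hd e ≠ tl e

namespace MultiGraph

/-- The boundary map `C₁(G;ℚ) → C₀(G;ℚ)`, `∂ e = head(e) − tail(e)`. -/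
def bndry (G : MultiGraph) (x : Fin G.nE → ℚ) : Fin G.nV → ℚ :=
  fun v => ∑ e, x e * ((if G.hd e = v then 1 else 0) - (if G.tl e = v then 1 else 0))

/-- The flow lattice `ℱ(G) = ker ∂ ∩ C₁(G;ℤ)`. -/
def flowSet (G : MultiGraph) : Set (Fin G.nE → ℚ) :=
  {x | (∀ e, isInt (x e)) ∧ G.bndry x = 0}

/-- The cut lattice `𝒞(G) = im ∂* ∩ C₁(G;ℤ)`. -/
def cutSet (G : MultiGraph) : Set (Fin G.nE → ℚ) :=
  {x | (∀ e, isInt (x e)) ∧ ∃ g : Fin G.nV → ℚ, ∀ e, x e = g (G.hd e) - g (G.tl e)}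

/-- Reachability using only edges from the set `A`. -/
def ReachIn (G : MultiGraph) (A : Set (Fin G.nE)) : Fin G.nV → Fin G.nV → Prop :=
  Relation.ReflTransGen
    (fun u v => ∃ e ∈ A, (G.hd e = u ∧ G.tl e = v) ∨ (G.hd e = v ∧ G.tl e = u))

def Connected (G : MultiGraph) : Prop := ∀ u v, G.ReachIn Set.univ u v

/-- 2-edge-connectedness: connected, and removing any one edge leaves it connected. -/
def TwoEdgeConnected (G : MultiGraph) : Prop :=
  G.Connected ∧ ∀ e : Fin G.nE, ∀ u v, G.ReachIn {e}ᶜ u v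

/-- `C` is the edge set of a cycle of `G`. -/
def IsCycleEdgeSet (G : MultiGraph) (C : Set (Fin G.nE)) : Prop :=
  ∃ k : ℕ, 0 < k ∧ ∃ (e : Fin k → Fin G.nE) (v : Fin k → Fin G.nV),
    Function.Injective e ∧ Function.Injective v ∧ C = Set.range e ∧
    ∀ i, (G.hd (e i) = v (finRotate k i) ∧ G.tl (e i) = v i) ∨
         (G.tl (e i) = v (finRotate k i) ∧ G.hd (e i) = v i)

/-- A maximal spanning forest: acyclic and realizing all of `G`'s reachability. -/
def IsMaxForest (G : MultiGraph) (F : Finset (Fin G.nE)) : Prop :=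
  (∀ C, G.IsCycleEdgeSet C → ¬(C ⊆ (↑F : Set (Fin G.nE)))) ∧
  ∀ u v, G.ReachIn Set.univ u v → G.ReachIn (↑F) u v

open Classical in
/-- The fundamental cut vector of `e ∈ F`:
`+1` on edges leaving the component `K₁` of the tail of `e` in `F − e`,
`−1` on edges entering it, `0` otherwise. -/
noncomputable def cutVec (G : MultiGraph) (F : Finset (Fin G.nE)) (e : Fin G.nE) :
    Fin G.nE → ℚ := fun j =>
  (if G.ReachIn (↑(F.erase e)) (G.tl j) (G.tl e) then 1 else 0)
    - (if G.ReachIn (↑(F.erase e)) (G.hd j) (G.tl e) then 1 else 0)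

/-- `x` is the fundamental cycle vector of `e ∉ F`: the unique flow supported on
`F ∪ {e}` whose coefficient on `e` is `+1`. -/
def IsFundCycleVec (G : MultiGraph) (F : Finset (Fin G.nE)) (e : Fin G.nE)
    (x : Fin G.nE → ℚ) : Prop :=
  G.bndry x = 0 ∧ (∀ j, j ∉ F → j ≠ e → x j = 0) ∧ x e = 1

/-- Reorienting the edges of `G`: `o e = true` keeps the reference direction. -/
def reorient (G : MultiGraph) (o : Fin G.nE → Bool) : MultiGraph :=
  { G with
    hd := fun e => if o e then G.hd e else G.tl e
    tl := fun e => if o e then G.tl e else G.hd e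
    loopless := by
      intro e
      by_cases h : o e = true
      · simpa [h] using G.loopless e
      · simpa [h] using (G.loopless e).symm }

end MultiGraph

/-- A 2-isomorphism: a bijection of edge sets preserving edge sets of cycles. -/
def TwoIsomorphic (G G' : MultiGraph) : Prop :=
  ∃ σ : Fin G.nE ≃ Fin G'.nE, ∀ C, G.IsCycleEdgeSet C ↔ G'.IsCycleEdgeSet (σ '' C)


section Stmt17Aux

open MultiGraph

variable (G : MultiGraph)

lemma reachIn_symm {A : Set (Fin G.nE)} {u v : Fin G.nV} (h : G.ReachIn A u v) :
    G.ReachIn A v u :=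
  (@Relation.ReflTransGen.stdSymm _ _ ⟨fun _ _ ⟨e, he, hab⟩ => ⟨e, he, hab.symm⟩⟩).symm _ _ h

lemma reachIn_mono {A B : Set (Fin G.nE)} (hAB : A ⊆ B) {u v : Fin G.nV}
    (h : G.ReachIn A u v) : G.ReachIn B u v :=
  Relation.ReflTransGen.mono (fun _ _ ⟨e, he, hab⟩ => ⟨e, hAB he, hab⟩) _ _ h

lemma reachIn_step {A : Set (Fin G.nE)} {e : Fin G.nE} (he : e ∈ A) :
    G.ReachIn A (G.hd e) (G.tl e) :=
  Relation.ReflTransGen.single ⟨e, he, Or.inl ⟨rfl, rfl⟩⟩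

lemma reachIn_reorient (o : Fin G.nE → Bool) (A : Set (Fin G.nE)) (u v : Fin G.nV) :
    (G.reorient o).ReachIn A u v ↔ G.ReachIn A u v := by
  have hstep : ∀ a b : Fin G.nV,
      (∃ e ∈ A, ((G.reorient o).hd e = a ∧ (G.reorient o).tl e = b) ∨
        ((G.reorient o).hd e = b ∧ (G.reorient o).tl e = a)) ↔
      (∃ e ∈ A, (G.hd e = a ∧ G.tl e = b) ∨ (G.hd e = b ∧ G.tl e = a)) := by
    intro a b
    constructor <;> rintro ⟨e, he, h⟩ <;> refine ⟨e, he, ?_⟩ <;>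
      rcases Bool.eq_false_or_eq_true (o e) with ho | ho <;>
        simp only [MultiGraph.reorient, ho, if_true, if_false, Bool.false_eq_true,
          cond_true, cond_false, ite_true, ite_false] at h ⊢ <;> tauto
  constructor <;> intro h
  · exact Relation.ReflTransGen.mono (fun a b hab => (hstep a b).mp hab) _ _ h
  · exact Relation.ReflTransGen.mono (fun a b hab => (hstep a b).mpr hab) _ _ h

lemma reachIn_isolated {A : Set (Fin G.nE)} {w v : Fin G.nV}
    (hA : ∀ e ∈ A, G.hd e ≠ w ∧ G.tl e ≠ w) (h : G.ReachIn A w v) : v = w := by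
  induction h with
  | refl => rfl
  | tail _ step ih =>
    obtain ⟨e, he, hab⟩ := step
    rcases hab with ⟨h1, h2⟩ | ⟨h1, h2⟩
    · exact absurd (h1.trans ih) (hA e he).1
    · exact absurd (h2.trans ih) (hA e he).2

lemma reachIn_collapse {A : Set (Fin G.nE)} {j₀ : Fin G.nE} {x w : Fin G.nV}
    (hj : (G.hd j₀ = x ∧ G.tl j₀ = w) ∨ (G.hd j₀ = w ∧ G.tl j₀ = x))
    (hA : ∀ e ∈ A, G.hd e ≠ w ∧ G.tl e ≠ w) {u v : Fin G.nV}
    (h : G.ReachIn (insert j₀ A) u v) :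
    G.ReachIn A (if u = w then x else u) (if v = w then x else v) := by
  have hxw : ∀ z : Fin G.nV, (z = x ∨ z = w) → (if z = w then x else z) = x := by
    rintro z (rfl | rfl)
    · by_cases hzw : z = w
      · simp [hzw]
      · simp [hzw]
    · simp
  induction h with
  | refl => exact Relation.ReflTransGen.refl
  | @tail b c _ step ih =>
    obtain ⟨e, he, hab⟩ := step
    rcases Set.mem_insert_iff.mp he with rfl | heA
    · have hb : b = x ∨ b = w := by
        rcases hab with ⟨h1, h2⟩ | ⟨h1, h2⟩ <;> rcases hj with ⟨g1, g2⟩ | ⟨g1, g2⟩ <;>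
          simp_all <;> tauto
      have hc : c = x ∨ c = w := by
        rcases hab with ⟨h1, h2⟩ | ⟨h1, h2⟩ <;> rcases hj with ⟨g1, g2⟩ | ⟨g1, g2⟩ <;>
          simp_all <;> tauto
      rw [hxw c hc]
      rw [hxw b hb] at ih
      exact ih
    · have hb : b ≠ w ∧ c ≠ w := by
        rcases hab with ⟨h1, h2⟩ | ⟨h1, h2⟩
        · exact ⟨h1 ▸ (hA e heA).1, h2 ▸ (hA e heA).2⟩
        · exact ⟨h2 ▸ (hA e heA).2, h1 ▸ (hA e heA).1⟩
      rw [if_neg hb.2]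
      rw [if_neg hb.1] at ih
      exact Relation.ReflTransGen.tail ih ⟨e, heA, hab⟩

lemma chain_max {α : Type} (r : α → α → Prop)
    (htr : ∀ a b c, r a b → r b c → r a c) :
    ∀ B : Finset α, (∀ u ∈ B, ∀ v ∈ B, r u v ∨ r v u) → B.Nonempty →
      ∃ x ∈ B, ∀ y ∈ B, r y x := by
  intro B
  induction B using Finset.cons_induction with
  | empty => rintro _ ⟨y, hy⟩; simp at hy
  | cons a B' ha ih =>
    intro hch _
    by_cases hB' : B'.Nonempty
    · obtain ⟨x, hxB, hmax⟩ := ih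
        (fun u hu v hv => hch _ (Finset.mem_cons_of_mem hu) _ (Finset.mem_cons_of_mem hv)) hB'
      rcases hch a (Finset.mem_cons_self _ _) x (Finset.mem_cons_of_mem hxB) with hax | hxa
      · refine ⟨x, Finset.mem_cons_of_mem hxB, ?_⟩
        intro y hy
        rcases Finset.mem_cons.mp hy with rfl | hy
        · exact hax
        · exact hmax y hy
      · refine ⟨a, Finset.mem_cons_self _ _, ?_⟩
        intro y hy
        rcases Finset.mem_cons.mp hy with rfl | hy
        · rcases hch y (Finset.mem_cons_self _ _) y (Finset.mem_cons_self _ _) with h | h <;>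
            exact h
        · exact htr _ _ _ (hmax y hy) hxa
    · refine ⟨a, Finset.mem_cons_self _ _, ?_⟩
      intro y hy
      rcases Finset.mem_cons.mp hy with rfl | hy
      · rcases hch y (Finset.mem_cons_self _ _) y (Finset.mem_cons_self _ _) with h | h <;>
          exact h
      · exact absurd ⟨y, hy⟩ hB'

end Stmt17Aux


section Stmt17DFS

open MultiGraph

variable (G : MultiGraph)

open Classical in
/-- The "child" endpoint of an edge, w.r.t. an ancestor relation. -/
noncomputable def chvv (anc : Fin G.nV → Fin G.nV → Prop) (e : Fin G.nE) : Fin G.nV :=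
  if anc (G.tl e) (G.hd e) then G.hd e else G.tl e

open Classical in
/-- The "parent" endpoint of an edge, w.r.t. an ancestor relation. -/
noncomputable def pavv (anc : Fin G.nV → Fin G.nV → Prop) (e : Fin G.nE) : Fin G.nV :=
  if anc (G.tl e) (G.hd e) then G.tl e else G.hd e

lemma chvv_or (anc : Fin G.nV → Fin G.nV → Prop) (e : Fin G.nE) :
    (chvv G anc e = G.hd e ∧ pavv G anc e = G.tl e) ∨
    (chvv G anc e = G.tl e ∧ pavv G anc e = G.hd e) := by
  unfold chvv pavv
  split
  · exact Or.inl ⟨rfl, rfl⟩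
  · exact Or.inr ⟨rfl, rfl⟩

/-- A partial DFS state: a forest `F` on the visited set `S` together with its
ancestor relation `anc`, satisfying the invariants of a DFS exploration. -/
structure DFS (S : Finset (Fin G.nV)) where
  F : Finset (Fin G.nE)
  anc : Fin G.nV → Fin G.nV → Prop
  endp : ∀ e ∈ F, G.hd e ∈ S ∧ G.tl e ∈ S
  amem : ∀ u v, anc u v → u ∈ S ∧ v ∈ S
  arefl : ∀ v ∈ S, anc v v
  atrans : ∀ u v w, anc u v → anc v w → anc u w
  comp : ∀ j : Fin G.nE, G.hd j ∈ S → G.tl j ∈ S →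
    anc (G.hd j) (G.tl j) ∨ anc (G.tl j) (G.hd j)
  chain : ∀ u v : Fin G.nV,
    (u ∈ S ∧ ∃ j, (G.hd j = u ∧ G.tl j ∉ S) ∨ (G.tl j = u ∧ G.hd j ∉ S)) →
    (v ∈ S ∧ ∃ j, (G.hd j = v ∧ G.tl j ∉ S) ∨ (G.tl j = v ∧ G.hd j ∉ S)) →
    anc u v ∨ anc v u
  nocyc : ∀ f ∈ F, ¬ G.ReachIn ↑(F.erase f) (chvv G anc f) (pavv G anc f)
  desc : ∀ f ∈ F, ∀ u, G.ReachIn ↑(F.erase f) u (chvv G anc f) ↔ anc (chvv G anc f) u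
  split : ∀ f ∈ F, ∀ u w : Fin G.nV, anc u w →
    anc (chvv G anc f) w ∨ G.ReachIn ↑(F.erase f) u w
  reach : ∀ u w : Fin G.nV, anc u w → G.ReachIn ↑F u w

/-- The empty DFS state. -/
def dfsEmpty : DFS G ∅ where
  F := ∅
  anc := fun _ _ => False
  endp := by simp
  amem := by simp
  arefl := by simp
  atrans := by simp
  comp := by simp
  chain := by simp
  nocyc := by simp
  desc := by simp
  split := by simp
  reach := by simp

lemma dfs_extend (S : Finset (Fin G.nV)) (st : DFS G S) (v₀ : Fin G.nV) (hv₀ : v₀ ∉ S) :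
    ∃ w ∉ S, Nonempty (DFS G (insert w S)) := by
  classical
  by_cases hcross : ∃ j : Fin G.nE, (G.hd j ∈ S ∧ G.tl j ∉ S) ∨ (G.tl j ∈ S ∧ G.hd j ∉ S)
  · -- Step B: extend along a boundary edge at a maximal boundary vertex
    set Bd : Finset (Fin G.nV) :=
      S.filter (fun u => ∃ j, (G.hd j = u ∧ G.tl j ∉ S) ∨ (G.tl j = u ∧ G.hd j ∉ S)) with hBd
    have hBdne : Bd.Nonempty := by
      obtain ⟨j, hj⟩ := hcross
      rcases hj with ⟨h1, h2⟩ | ⟨h1, h2⟩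
      · exact ⟨G.hd j, Finset.mem_filter.mpr ⟨h1, ⟨j, Or.inl ⟨rfl, h2⟩⟩⟩⟩
      · exact ⟨G.tl j, Finset.mem_filter.mpr ⟨h1, ⟨j, Or.inr ⟨rfl, h2⟩⟩⟩⟩
    have hchB : ∀ u ∈ Bd, ∀ v ∈ Bd, st.anc u v ∨ st.anc v u := by
      intro u hu v hv
      rw [hBd, Finset.mem_filter] at hu hv
      exact st.chain u v hu hv
    obtain ⟨x, hxBd, hmax'⟩ := chain_max st.anc st.atrans Bd hchB hBdne
    have hxS : x ∈ S := (Finset.mem_filter.mp hxBd).1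
    obtain ⟨j₀, hj₀conf'⟩ := (Finset.mem_filter.mp hxBd).2
    obtain ⟨w, hw, hconf⟩ : ∃ w, w ∉ S ∧
        ((G.hd j₀ = x ∧ G.tl j₀ = w) ∨ (G.hd j₀ = w ∧ G.tl j₀ = x)) := by
      rcases hj₀conf' with ⟨h1, h2⟩ | ⟨h1, h2⟩
      · exact ⟨G.tl j₀, h2, Or.inl ⟨h1, rfl⟩⟩
      · exact ⟨G.hd j₀, h2, Or.inr ⟨rfl, h1⟩⟩
    have hmax : ∀ y ∈ S, (∃ j, (G.hd j = y ∧ G.tl j ∉ S) ∨ (G.tl j = y ∧ G.hd j ∉ S)) →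
        st.anc y x := fun y hy hj => hmax' y (Finset.mem_filter.mpr ⟨hy, hj⟩)
    have hxw : x ≠ w := fun hc => hw (hc ▸ hxS)
    have hFw : ∀ e ∈ st.F, G.hd e ≠ w ∧ G.tl e ≠ w := by
      intro e he
      have h := st.endp e he
      exact ⟨fun hc => hw (hc ▸ h.1), fun hc => hw (hc ▸ h.2)⟩
    have hj₀F : j₀ ∉ st.F := by
      intro hc
      rcases hconf with ⟨h1, h2⟩ | ⟨h1, h2⟩
      · exact hw (h2 ▸ (st.endp j₀ hc).2)
      · exact hw (h1 ▸ (st.endp j₀ hc).1)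
    set anc' : Fin G.nV → Fin G.nV → Prop :=
      fun a b => st.anc a b ∨ (b = w ∧ (st.anc a x ∨ a = w)) with hanc'
    -- chvv/pavv of old forest edges are unchanged
    have hchst : ∀ f ∈ st.F,
        chvv G anc' f = chvv G st.anc f ∧ pavv G anc' f = pavv G st.anc f := by
      intro f hf
      have hiff : anc' (G.tl f) (G.hd f) ↔ st.anc (G.tl f) (G.hd f) := by
        constructor
        · intro h
          rcases h with h | ⟨hww, -⟩
          · exact h
          · exact absurd (hww ▸ (st.endp f hf).1) hw
        · exact Or.inl
      constructor <;> [unfold chvv; unfold pavv] <;>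
        (by_cases h : st.anc (G.tl f) (G.hd f)
         · rw [if_pos (hiff.mpr h), if_pos h]
         · rw [if_neg (fun hc => h (hiff.mp hc)), if_neg h])
    have hchj₀ : chvv G anc' j₀ = w ∧ pavv G anc' j₀ = x := by
      rcases hconf with ⟨h1, h2⟩ | ⟨h1, h2⟩
      · have hcond : ¬ anc' (G.tl j₀) (G.hd j₀) := by
          rintro (h | ⟨hww, -⟩)
          · exact hw (h2 ▸ (st.amem _ _ h).1)
          · exact hxw (h1.symm.trans hww)
        constructor
        · unfold chvv; rw [if_neg hcond]; exact h2
        · unfold pavv; rw [if_neg hcond]; exact h1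
      · have hcond : anc' (G.tl j₀) (G.hd j₀) :=
          Or.inr ⟨h1, Or.inl (by rw [h2]; exact st.arefl x hxS)⟩
        constructor
        · unfold chvv; rw [if_pos hcond]; exact h1
        · unfold pavv; rw [if_pos hcond]; exact h2
    have hcol : ∀ (A : Finset (Fin G.nE)), A ⊆ st.F → ∀ u v : Fin G.nV,
        G.ReachIn ↑(insert j₀ A) u v →
        G.ReachIn ↑A (if u = w then x else u) (if v = w then x else v) := by
      intro A hA u v h
      rw [Finset.coe_insert] at h
      exact reachIn_collapse G hconf (fun e he => hFw e (hA he)) h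
    have hstepwx : ∀ A : Set (Fin G.nE), j₀ ∈ A → G.ReachIn A w x := by
      intro A hA
      rcases hconf with ⟨h1, h2⟩ | ⟨h1, h2⟩
      · exact Relation.ReflTransGen.single ⟨j₀, hA, Or.inr ⟨h1, h2⟩⟩
      · exact Relation.ReflTransGen.single ⟨j₀, hA, Or.inl ⟨h1, h2⟩⟩
    have hstepxw : ∀ A : Set (Fin G.nE), j₀ ∈ A → G.ReachIn A x w :=
      fun A hA => reachIn_symm G (hstepwx A hA)
    have hj₀mem : ∀ A : Finset (Fin G.nE), (j₀ : Fin G.nE) ∈ (↑(insert j₀ A) : Set (Fin G.nE)) :=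
      fun A => Finset.mem_coe.mpr (Finset.mem_insert_self _ _)
    have hchS : ∀ f ∈ st.F, chvv G st.anc f ≠ w ∧ pavv G st.anc f ≠ w := by
      intro f hf
      rcases chvv_or G st.anc f with ⟨e1, e2⟩ | ⟨e1, e2⟩ <;> rw [e1, e2]
      · exact ⟨(hFw f hf).1, (hFw f hf).2⟩
      · exact ⟨(hFw f hf).2, (hFw f hf).1⟩
    refine ⟨w, hw, ⟨⟨insert j₀ st.F, anc', ?_, ?_, ?_, ?_, ?_, ?_, ?_, ?_, ?_, ?_⟩⟩⟩
    · -- endp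
      intro e he
      rcases Finset.mem_insert.mp he with rfl | he'
      · rcases hconf with ⟨h1, h2⟩ | ⟨h1, h2⟩
        · exact ⟨h1 ▸ Finset.mem_insert_of_mem hxS, h2 ▸ Finset.mem_insert_self _ _⟩
        · exact ⟨h1 ▸ Finset.mem_insert_self _ _, h2 ▸ Finset.mem_insert_of_mem hxS⟩
      · exact ⟨Finset.mem_insert_of_mem (st.endp e he').1,
          Finset.mem_insert_of_mem (st.endp e he').2⟩
    · -- amem
      rintro u v (h | ⟨rfl, h2⟩)
      · exact ⟨Finset.mem_insert_of_mem (st.amem _ _ h).1,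
          Finset.mem_insert_of_mem (st.amem _ _ h).2⟩
      · refine ⟨?_, Finset.mem_insert_self _ _⟩
        rcases h2 with h2 | rfl
        · exact Finset.mem_insert_of_mem (st.amem _ _ h2).1
        · exact Finset.mem_insert_self _ _
    · -- arefl
      intro v hv
      rcases Finset.mem_insert.mp hv with rfl | hv'
      · exact Or.inr ⟨rfl, Or.inr rfl⟩
      · exact Or.inl (st.arefl v hv')
    · -- atrans
      rintro u v z (huv | ⟨rfl, h2⟩) (hvz | ⟨rfl, h3⟩)
      · exact Or.inl (st.atrans _ _ _ huv hvz)
      · rcases h3 with h3 | rfl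
        · exact Or.inr ⟨rfl, Or.inl (st.atrans _ _ _ huv h3)⟩
        · exact absurd (st.amem _ _ huv).2 hw
      · exact absurd (st.amem _ _ hvz).1 hw
      · exact Or.inr ⟨rfl, h2⟩
    · -- comp
      intro j h1 h2
      rcases Finset.mem_insert.mp h1 with hh | hh <;> rcases Finset.mem_insert.mp h2 with ht | ht
      · exact absurd (hh.trans ht.symm) (G.loopless j)
      · refine Or.inr (Or.inr ⟨hh, Or.inl ?_⟩)
        exact hmax _ ht ⟨j, Or.inr ⟨rfl, fun hc => hw (hh ▸ hc)⟩⟩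
      · refine Or.inl (Or.inr ⟨ht, Or.inl ?_⟩)
        exact hmax _ hh ⟨j, Or.inl ⟨rfl, fun hc => hw (ht ▸ hc)⟩⟩
      · rcases st.comp j hh ht with h | h
        · exact Or.inl (Or.inl h)
        · exact Or.inr (Or.inl h)
    · -- chain
      rintro u v ⟨huS, hju⟩ ⟨hvS, hjv⟩
      rcases Finset.mem_insert.mp huS with rfl | huS' <;>
        rcases Finset.mem_insert.mp hvS with rfl | hvS'
      · exact Or.inl (Or.inr ⟨rfl, Or.inr rfl⟩)
      · refine Or.inr (Or.inr ⟨rfl, Or.inl ?_⟩)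
        obtain ⟨j, hj⟩ := hjv
        refine hmax _ hvS' ⟨j, ?_⟩
        rcases hj with ⟨a, b⟩ | ⟨a, b⟩
        · exact Or.inl ⟨a, fun hc => b (Finset.mem_insert_of_mem hc)⟩
        · exact Or.inr ⟨a, fun hc => b (Finset.mem_insert_of_mem hc)⟩
      · refine Or.inl (Or.inr ⟨rfl, Or.inl ?_⟩)
        obtain ⟨j, hj⟩ := hju
        refine hmax _ huS' ⟨j, ?_⟩
        rcases hj with ⟨a, b⟩ | ⟨a, b⟩
        · exact Or.inl ⟨a, fun hc => b (Finset.mem_insert_of_mem hc)⟩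
        · exact Or.inr ⟨a, fun hc => b (Finset.mem_insert_of_mem hc)⟩
      · obtain ⟨j, hj⟩ := hju
        obtain ⟨j', hj'⟩ := hjv
        have hju2 : ∃ j, (G.hd j = u ∧ G.tl j ∉ S) ∨ (G.tl j = u ∧ G.hd j ∉ S) := by
          refine ⟨j, ?_⟩
          rcases hj with ⟨a, b⟩ | ⟨a, b⟩
          · exact Or.inl ⟨a, fun hc => b (Finset.mem_insert_of_mem hc)⟩
          · exact Or.inr ⟨a, fun hc => b (Finset.mem_insert_of_mem hc)⟩
        have hjv2 : ∃ j, (G.hd j = v ∧ G.tl j ∉ S) ∨ (G.tl j = v ∧ G.hd j ∉ S) := by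
          refine ⟨j', ?_⟩
          rcases hj' with ⟨a, b⟩ | ⟨a, b⟩
          · exact Or.inl ⟨a, fun hc => b (Finset.mem_insert_of_mem hc)⟩
          · exact Or.inr ⟨a, fun hc => b (Finset.mem_insert_of_mem hc)⟩
        rcases st.chain u v ⟨huS', hju2⟩ ⟨hvS', hjv2⟩ with h | h
        · exact Or.inl (Or.inl h)
        · exact Or.inr (Or.inl h)
    · -- nocyc
      intro f hf
      rcases Finset.mem_insert.mp hf with rfl | hfF
      · rw [Finset.erase_insert hj₀F, hchj₀.1, hchj₀.2]
        intro hcon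
        exact hxw (reachIn_isolated G (fun e he => hFw e (Finset.mem_coe.mp he)) hcon)
      · have hfj : j₀ ≠ f := fun hc => hj₀F (hc ▸ hfF)
        rw [Finset.erase_insert_of_ne hfj, (hchst f hfF).1, (hchst f hfF).2]
        intro hcon
        have h2 := hcol (st.F.erase f) (Finset.erase_subset _ _) _ _ hcon
        rw [if_neg (hchS f hfF).1, if_neg (hchS f hfF).2] at h2
        exact st.nocyc f hfF h2
    · -- desc
      intro f hf u
      rcases Finset.mem_insert.mp hf with rfl | hfF
      · rw [Finset.erase_insert hj₀F, hchj₀.1]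
        constructor
        · intro h
          have h2 := reachIn_isolated G (fun e he => hFw e (Finset.mem_coe.mp he))
            (reachIn_symm G h)
          rw [h2]
          exact Or.inr ⟨rfl, Or.inr rfl⟩
        · rintro (h | ⟨rfl, -⟩)
          · exact absurd (st.amem _ _ h).1 hw
          · exact Relation.ReflTransGen.refl
      · have hfj : j₀ ≠ f := fun hc => hj₀F (hc ▸ hfF)
        rw [Finset.erase_insert_of_ne hfj, (hchst f hfF).1]
        constructor
        · intro h
          have h2 := hcol (st.F.erase f) (Finset.erase_subset _ _) _ _ h
          rw [if_neg (hchS f hfF).1] at h2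
          by_cases huw : u = w
          · rw [if_pos huw] at h2
            exact Or.inr ⟨huw, Or.inl ((st.desc f hfF x).mp h2)⟩
          · rw [if_neg huw] at h2
            exact Or.inl ((st.desc f hfF u).mp h2)
        · rintro (h | ⟨rfl, h2⟩)
          · exact reachIn_mono G (Finset.coe_subset.mpr (Finset.subset_insert _ _))
              ((st.desc f hfF u).mpr h)
          · rcases h2 with h2 | hww
            · have hx2 := (st.desc f hfF x).mpr h2
              exact (hstepwx _ (hj₀mem _)).trans
                (reachIn_mono G (Finset.coe_subset.mpr (Finset.subset_insert _ _)) hx2)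
            · exact absurd hww (hchS f hfF).1
    · -- split
      intro f hf u z h
      rcases Finset.mem_insert.mp hf with rfl | hfF
      · rw [Finset.erase_insert hj₀F, hchj₀.1]
        rcases h with h | ⟨rfl, -⟩
        · exact Or.inr (st.reach _ _ h)
        · exact Or.inl (Or.inr ⟨rfl, Or.inr rfl⟩)
      · have hfj : j₀ ≠ f := fun hc => hj₀F (hc ▸ hfF)
        rw [Finset.erase_insert_of_ne hfj, (hchst f hfF).1]
        rcases h with h | ⟨rfl, h2⟩
        · rcases st.split f hfF u z h with h3 | h3
          · exact Or.inl (Or.inl h3)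
          · exact Or.inr (reachIn_mono G (Finset.coe_subset.mpr (Finset.subset_insert _ _)) h3)
        · rcases h2 with h2 | rfl
          · rcases st.split f hfF u x h2 with h3 | h3
            · exact Or.inl (Or.inr ⟨rfl, Or.inl h3⟩)
            · exact Or.inr ((reachIn_mono G (Finset.coe_subset.mpr
                (Finset.subset_insert _ _)) h3).trans (hstepxw _ (hj₀mem _)))
          · exact Or.inr Relation.ReflTransGen.refl
    · -- reach
      rintro u z (h | ⟨rfl, h2⟩)
      · exact reachIn_mono G (Finset.coe_subset.mpr (Finset.subset_insert _ _)) (st.reach _ _ h)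
      · rcases h2 with h2 | rfl
        · exact (reachIn_mono G (Finset.coe_subset.mpr (Finset.subset_insert _ _))
            (st.reach _ _ h2)).trans (hstepxw _ (hj₀mem _))
        · exact Relation.ReflTransGen.refl
  · -- Step A: start a new root v₀
    push_neg at hcross
    set anc' : Fin G.nV → Fin G.nV → Prop :=
      fun a b => st.anc a b ∨ (a = v₀ ∧ b = v₀) with hanc'
    have hchst : ∀ f ∈ st.F,
        chvv G anc' f = chvv G st.anc f ∧ pavv G anc' f = pavv G st.anc f := by
      intro f hf
      have hiff : anc' (G.tl f) (G.hd f) ↔ st.anc (G.tl f) (G.hd f) := by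
        constructor
        · rintro (h | ⟨htl, -⟩)
          · exact h
          · exact absurd (htl ▸ (st.endp f hf).2) hv₀
        · exact Or.inl
      constructor <;> [unfold chvv; unfold pavv] <;>
        (by_cases h : st.anc (G.tl f) (G.hd f)
         · rw [if_pos (hiff.mpr h), if_pos h]
         · rw [if_neg (fun hc => h (hiff.mp hc)), if_neg h])
    have hchS : ∀ f ∈ st.F, chvv G st.anc f ≠ v₀ := by
      intro f hf
      rcases chvv_or G st.anc f with ⟨e1, -⟩ | ⟨e1, -⟩ <;> rw [e1]
      · exact fun hc => hv₀ (hc ▸ (st.endp f hf).1)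
      · exact fun hc => hv₀ (hc ▸ (st.endp f hf).2)
    refine ⟨v₀, hv₀, ⟨⟨st.F, anc', ?_, ?_, ?_, ?_, ?_, ?_, ?_, ?_, ?_, ?_⟩⟩⟩
    · -- endp
      intro e he
      exact ⟨Finset.mem_insert_of_mem (st.endp e he).1,
        Finset.mem_insert_of_mem (st.endp e he).2⟩
    · -- amem
      rintro u v (h | ⟨h1, h2⟩)
      · exact ⟨Finset.mem_insert_of_mem (st.amem _ _ h).1,
          Finset.mem_insert_of_mem (st.amem _ _ h).2⟩
      · exact ⟨by rw [h1]; exact Finset.mem_insert_self _ _,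
          by rw [h2]; exact Finset.mem_insert_self _ _⟩
    · -- arefl
      intro v hv
      rcases Finset.mem_insert.mp hv with rfl | hv'
      · exact Or.inr ⟨rfl, rfl⟩
      · exact Or.inl (st.arefl v hv')
    · -- atrans
      rintro u v z (huv | ⟨h1, h2⟩) (hvz | ⟨h3, h4⟩)
      · exact Or.inl (st.atrans _ _ _ huv hvz)
      · exact absurd (h3 ▸ (st.amem _ _ huv).2) hv₀
      · exact absurd (h2 ▸ (st.amem _ _ hvz).1) hv₀
      · exact Or.inr ⟨h1, h4⟩
    · -- comp
      intro j h1 h2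
      rcases Finset.mem_insert.mp h1 with hh | hh <;> rcases Finset.mem_insert.mp h2 with ht | ht
      · exact absurd (hh.trans ht.symm) (G.loopless j)
      · exact absurd (hh ▸ (hcross j).2 ht) hv₀
      · exact absurd (ht ▸ (hcross j).1 hh) hv₀
      · rcases st.comp j hh ht with h | h
        · exact Or.inl (Or.inl h)
        · exact Or.inr (Or.inl h)
    · -- chain
      rintro u v ⟨huS, hju⟩ ⟨hvS, hjv⟩
      have key : ∀ y : Fin G.nV, y ∈ insert v₀ S →
          (∃ j, (G.hd j = y ∧ G.tl j ∉ insert v₀ S) ∨ (G.tl j = y ∧ G.hd j ∉ insert v₀ S)) →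
          y = v₀ := by
        intro y hy hjy
        rcases Finset.mem_insert.mp hy with rfl | hy'
        · rfl
        · obtain ⟨j, hj⟩ := hjy
          exfalso
          rcases hj with ⟨a, b⟩ | ⟨a, b⟩
          · exact b (Finset.mem_insert_of_mem ((hcross j).1 (by rw [a]; exact hy')))
          · exact b (Finset.mem_insert_of_mem ((hcross j).2 (by rw [a]; exact hy')))
      rw [key u huS hju, key v hvS hjv]
      exact Or.inl (Or.inr ⟨rfl, rfl⟩)
    · -- nocyc
      intro f hf
      rw [(hchst f hf).1, (hchst f hf).2]
      exact st.nocyc f hf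
    · -- desc
      intro f hf u
      rw [(hchst f hf).1]
      constructor
      · intro h
        exact Or.inl ((st.desc f hf u).mp h)
      · rintro (h | ⟨h1, -⟩)
        · exact (st.desc f hf u).mpr h
        · exact absurd h1 (hchS f hf)
    · -- split
      intro f hf u z h
      rw [(hchst f hf).1]
      rcases h with h | ⟨h1, h2⟩
      · rcases st.split f hf u z h with h3 | h3
        · exact Or.inl (Or.inl h3)
        · exact Or.inr h3
      · refine Or.inr ?_
        rw [h1, h2]
        exact Relation.ReflTransGen.refl
    · -- reach
      rintro u z (h | ⟨h1, h2⟩)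
      · exact st.reach _ _ h
      · rw [h1, h2]
        exact Relation.ReflTransGen.refl

lemma dfs_univ : Nonempty (DFS G Finset.univ) := by
  suffices h : ∀ m : ℕ, ∀ S : Finset (Fin G.nV), G.nV - S.card ≤ m → DFS G S →
      Nonempty (DFS G Finset.univ) by
    exact h G.nV ∅ (by simp) (dfsEmpty G)
  intro m
  induction m with
  | zero =>
    intro S hcard st
    have h1 : S.card ≤ G.nV := by
      simpa using Finset.card_le_card (Finset.subset_univ S)
    have : S = Finset.univ := by
      apply Finset.eq_univ_of_card
      simp only [Fintype.card_fin]
      omega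
    exact ⟨this ▸ st⟩
  | succ m ih =>
    intro S hcard st
    by_cases hS : S = Finset.univ
    · exact ⟨hS ▸ st⟩
    · obtain ⟨v₀, hv₀⟩ : ∃ v₀, v₀ ∉ S := by
        by_contra hc
        push_neg at hc
        exact hS (Finset.eq_univ_iff_forall.mpr hc)
      obtain ⟨w, hw, ⟨st'⟩⟩ := dfs_extend G S st v₀ hv₀
      have hcard' : G.nV - (insert w S).card ≤ m := by
        have h1 : S.card < G.nV := by
          have h2 : S.card ≤ G.nV := by
            simpa using Finset.card_le_card (Finset.subset_univ S)
          rcases lt_or_eq_of_le h2 with h | h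
          · exact h
          · exact absurd (Finset.eq_univ_of_card S (by simpa using h)) hS
        rw [Finset.card_insert_of_notMem hw]
        omega
      exact ih (insert w S) hcard' st'

lemma anc_pav_chv (st : DFS G Finset.univ) (j : Fin G.nE) :
    st.anc (pavv G st.anc j) (chvv G st.anc j) := by
  unfold chvv pavv
  by_cases h : st.anc (G.tl j) (G.hd j)
  · rw [if_pos h, if_pos h]; exact h
  · rw [if_neg h, if_neg h]
    rcases st.comp j (Finset.mem_univ _) (Finset.mem_univ _) with h2 | h2
    · exact h2
    · exact absurd h2 h

lemma reach_univ_to_F (st : DFS G Finset.univ) (u v : Fin G.nV)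
    (h : G.ReachIn Set.univ u v) : G.ReachIn ↑st.F u v := by
  induction h with
  | refl => exact Relation.ReflTransGen.refl
  | tail _ step ih =>
    obtain ⟨j, -, hab⟩ := step
    have hrF : G.ReachIn ↑st.F (G.hd j) (G.tl j) := by
      rcases st.comp j (Finset.mem_univ _) (Finset.mem_univ _) with h2 | h2
      · exact st.reach _ _ h2
      · exact reachIn_symm G (st.reach _ _ h2)
    rcases hab with ⟨h1, h2⟩ | ⟨h1, h2⟩
    · rw [h1, h2] at hrF
      exact ih.trans hrF
    · rw [h1, h2] at hrF
      exact ih.trans (reachIn_symm G hrF)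

open Fin.NatCast in
lemma cycle_not_subset (st : DFS G Finset.univ) (C : Set (Fin G.nE))
    (hC : G.IsCycleEdgeSet C) : ¬ C ⊆ ↑st.F := by
  obtain ⟨k, hk, e, v, hinje, hinjv, hCr, hadj⟩ := hC
  intro hsub
  rw [hCr] at hsub
  obtain ⟨n, rfl⟩ : ∃ n, k = n + 1 := ⟨k - 1, (Nat.succ_pred_eq_of_pos hk).symm⟩
  have hmem : ∀ i, e i ∈ st.F := fun i => Finset.mem_coe.mp (hsub (Set.mem_range_self i))
  set A : Set (Fin G.nE) := ↑(st.F.erase (e 0)) with hA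
  have walk : ∀ m : ℕ, m ≤ n →
      G.ReachIn A (v ((1 + m : ℕ) : Fin (n+1))) (v ((1 : ℕ) : Fin (n+1))) := by
    intro m
    induction m with
    | zero => intro _; simp only [Nat.add_zero]; exact Relation.ReflTransGen.refl
    | succ m ih =>
      intro hm
      have ihm := ih (le_trans (Nat.le_succ m) hm)
      have hiz : ((1 + m : ℕ) : Fin (n+1)) ≠ 0 := by
        rw [Ne, Fin.natCast_eq_zero]
        intro hdvd
        have := Nat.le_of_dvd (by omega) hdvd
        omega
      have hrot : finRotate (n+1) ((1 + m : ℕ) : Fin (n+1)) = ((1 + (m+1) : ℕ) : Fin (n+1)) := by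
        rw [finRotate_succ_apply]
        push_cast
        abel
      have heA : e ((1 + m : ℕ) : Fin (n+1)) ∈ A :=
        Finset.mem_coe.mpr (Finset.mem_erase.mpr ⟨fun hc => hiz (hinje hc), hmem _⟩)
      have hstep : ∃ e' ∈ A,
          (G.hd e' = v ((1 + (m+1) : ℕ) : Fin (n+1)) ∧ G.tl e' = v ((1 + m : ℕ) : Fin (n+1))) ∨
          (G.hd e' = v ((1 + m : ℕ) : Fin (n+1)) ∧ G.tl e' = v ((1 + (m+1) : ℕ) : Fin (n+1))) := by
        rcases hadj ((1 + m : ℕ) : Fin (n+1)) with ⟨h1, h2⟩ | ⟨h1, h2⟩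
        · exact ⟨e _, heA, Or.inl ⟨by rw [h1, hrot], h2⟩⟩
        · exact ⟨e _, heA, Or.inr ⟨h2, by rw [h1, hrot]⟩⟩
      exact Relation.ReflTransGen.head hstep ihm
  have hw := walk n le_rfl
  have hcast : ((1 + n : ℕ) : Fin (n+1)) = 0 := by
    rw [Nat.add_comm 1 n]
    exact Fin.natCast_self (n+1)
  rw [hcast] at hw
  have hreach1 : G.ReachIn A (v 0) (v (finRotate (n+1) 0)) := by
    rw [finRotate_succ_apply, zero_add]
    have : ((1 : ℕ) : Fin (n+1)) = 1 := Nat.cast_one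
    rw [this] at hw
    exact hw
  have hreach2 := reachIn_symm G hreach1
  apply st.nocyc (e 0) (hmem 0)
  rcases hadj 0 with ⟨h1, h2⟩ | ⟨h1, h2⟩ <;>
    rcases chvv_or G st.anc (e 0) with ⟨c1, c2⟩ | ⟨c1, c2⟩ <;>
      rw [c1, c2, h1, h2] <;> first | exact hreach1 | exact hreach2

end Stmt17DFS

/-- every graph has a maximal spanning forest `F` and orientations
`𝒪₁`, `𝒪₂` for which all fundamental cut vectors (resp. all fundamental cycle
vectors) have all coordinates in `{0,1}`. -/
theorem stmt_17 (G : MultiGraph) :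
    ∃ F : Finset (Fin G.nE), G.IsMaxForest F ∧
      (∃ o₁ : Fin G.nE → Bool, ∀ e ∈ F, ∀ j,
        (G.reorient o₁).cutVec F e j = 0 ∨ (G.reorient o₁).cutVec F e j = 1) ∧
      (∃ o₂ : Fin G.nE → Bool, ∀ e ∉ F, ∀ x : Fin G.nE → ℚ,
        (G.reorient o₂).IsFundCycleVec F e x → ∀ j, x j = 0 ∨ x j = 1) := by
  classical
  obtain ⟨st⟩ := dfs_univ G
  set o₁ : Fin G.nE → Bool := fun j => if st.anc (G.tl j) (G.hd j) then true else false
    with ho₁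
  set o₂ : Fin G.nE → Bool := fun j => if j ∈ st.F then !(o₁ j) else o₁ j with ho₂
  have h1tl : ∀ j, (G.reorient o₁).tl j = pavv G st.anc j := by
    intro j
    show (if o₁ j then G.tl j else G.hd j) = _
    by_cases h : st.anc (G.tl j) (G.hd j) <;> simp [ho₁, h, pavv]
  have h1hd : ∀ j, (G.reorient o₁).hd j = chvv G st.anc j := by
    intro j
    show (if o₁ j then G.hd j else G.tl j) = _
    by_cases h : st.anc (G.tl j) (G.hd j) <;> simp [ho₁, h, chvv]
  have h2tl : ∀ j, (G.reorient o₂).tl j =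
      (if j ∈ st.F then chvv G st.anc j else pavv G st.anc j) := by
    intro j
    show (if o₂ j then G.tl j else G.hd j) = _
    by_cases hF : j ∈ st.F <;> by_cases h : st.anc (G.tl j) (G.hd j) <;>
      simp [ho₂, ho₁, hF, h, chvv, pavv] <;> intro h' <;> first | exact absurd hF h' | exact absurd h' hF
  have h2hd : ∀ j, (G.reorient o₂).hd j =
      (if j ∈ st.F then pavv G st.anc j else chvv G st.anc j) := by
    intro j
    show (if o₂ j then G.hd j else G.tl j) = _
    by_cases hF : j ∈ st.F <;> by_cases h : st.anc (G.tl j) (G.hd j) <;>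
      simp [ho₂, ho₁, hF, h, chvv, pavv] <;> intro h' <;> first | exact absurd hF h' | exact absurd h' hF
  refine ⟨st.F, ⟨fun C hC => cycle_not_subset G st C hC, fun u v h => reach_univ_to_F G st u v h⟩,
    ⟨o₁, ?_⟩, ⟨o₂, ?_⟩⟩
  · -- cut vectors
    intro e he j
    have key : ∀ u w, st.anc u w → G.ReachIn ↑(st.F.erase e) w (pavv G st.anc e) →
        G.ReachIn ↑(st.F.erase e) u (pavv G st.anc e) := by
      intro u w h hQ
      rcases st.split e he u w h with h2 | h2
      · exact absurd ((reachIn_symm G ((st.desc e he w).mpr h2)).trans hQ) (st.nocyc e he)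
      · exact h2.trans hQ
    simp only [MultiGraph.cutVec]
    rw [h1tl j, h1tl e, h1hd j]
    by_cases hQ : G.ReachIn ↑(st.F.erase e) (chvv G st.anc j) (pavv G st.anc e)
    · have hP := key _ _ (anc_pav_chv G st j) hQ
      erw [if_pos ((reachIn_reorient G o₁ _ _ _).mpr hP),
        if_pos ((reachIn_reorient G o₁ _ _ _).mpr hQ)]
      left; ring
    · by_cases hP : G.ReachIn ↑(st.F.erase e) (pavv G st.anc j) (pavv G st.anc e)
      · erw [if_pos ((reachIn_reorient G o₁ _ _ _).mpr hP),
          if_neg (fun hc => hQ ((reachIn_reorient G o₁ _ _ _).mp hc))]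
        right; ring
      · erw [if_neg (fun hc => hP ((reachIn_reorient G o₁ _ _ _).mp hc)),
          if_neg (fun hc => hQ ((reachIn_reorient G o₁ _ _ _).mp hc))]
        left; ring
  · -- cycle vectors
    intro e he x hx j
    obtain ⟨hb, hsupp, hxe⟩ := hx
    by_cases hjF : j ∈ st.F
    swap
    · by_cases hje : j = e
      · right; rw [hje]; exact hxe
      · left; exact hsupp j hjF hje
    · -- j ∈ F
      set f := j with hfj
      set g : Fin G.nV → ℚ :=
        fun v => if G.ReachIn ↑(st.F.erase f) v (chvv G st.anc f) then 1 else 0 with hgdef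
      set H : Fin G.nE → Fin G.nV := (G.reorient o₂).hd with hH
      set T : Fin G.nE → Fin G.nV := (G.reorient o₂).tl with hT
      have hb0 : ∀ w : Fin G.nV,
          ∑ i : Fin G.nE, x i * ((if H i = w then (1:ℚ) else 0) - (if T i = w then 1 else 0))
            = 0 := by
        intro w
        have := congrFun hb w
        simp [MultiGraph.bndry, hH, hT] at this ⊢; erw [Pi.zero_apply] at this; refine Eq.trans (Finset.sum_congr rfl fun i _ => ?_) this; congr 1; split_ifs <;> first | rfl | contradiction | (exfalso; simp_all)
      have h1 : ∀ a : Fin G.nV, ∑ w : Fin G.nV, g w * (if a = w then (1:ℚ) else 0) = g a := by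
        intro a
        simp [mul_ite, mul_one, mul_zero]
      have h2 : ∀ i : Fin G.nE,
          ∑ w : Fin G.nV, g w * (x i * ((if H i = w then (1:ℚ) else 0)
            - (if T i = w then 1 else 0))) = x i * (g (H i) - g (T i)) := by
        intro i
        rw [mul_sub, ← h1 (H i), ← h1 (T i), Finset.mul_sum, Finset.mul_sum,
          ← Finset.sum_sub_distrib]
        refine Finset.sum_congr rfl fun w _ => ?_
        ring
      have key : ∑ i : Fin G.nE, x i * (g (H i) - g (T i)) = 0 := by
        calc ∑ i : Fin G.nE, x i * (g (H i) - g (T i))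
            = ∑ i : Fin G.nE, ∑ w : Fin G.nV, g w * (x i * ((if H i = w then (1:ℚ) else 0)
              - (if T i = w then 1 else 0))) := by
              exact Finset.sum_congr rfl fun i _ => (h2 i).symm
          _ = ∑ w : Fin G.nV, ∑ i : Fin G.nE, g w * (x i * ((if H i = w then (1:ℚ) else 0)
              - (if T i = w then 1 else 0))) := Finset.sum_comm
          _ = 0 := by
              refine Finset.sum_eq_zero fun w _ => ?_
              rw [← Finset.mul_sum, hb0 w, mul_zero]
      have hvan : ∀ i : Fin G.nE, i ∉ ({f, e} : Finset (Fin G.nE)) →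
          x i * (g (H i) - g (T i)) = 0 := by
        intro i hi
        simp only [Finset.mem_insert, Finset.mem_singleton, not_or] at hi
        by_cases hiF : i ∈ st.F
        · have hif : i ∈ st.F.erase f := Finset.mem_erase.mpr ⟨hi.1, hiF⟩
          have hreach : G.ReachIn ↑(st.F.erase f) (G.hd i) (G.tl i) :=
            reachIn_step G (Finset.mem_coe.mpr hif)
          have hgeq : g (G.hd i) = g (G.tl i) := by
            simp only [hgdef]
            by_cases hr : G.ReachIn ↑(st.F.erase f) (G.hd i) (chvv G st.anc f)
            · have h' : G.ReachIn ↑(st.F.erase f) (G.tl i) (chvv G st.anc f) :=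
                (reachIn_symm G hreach).trans hr
              rw [if_pos hr, if_pos h']
            · have h' : ¬ G.ReachIn ↑(st.F.erase f) (G.tl i) (chvv G st.anc f) :=
                fun hc => hr (hreach.trans hc)
              rw [if_neg hr, if_neg h']
          have hHT : (H i = G.hd i ∧ T i = G.tl i) ∨ (H i = G.tl i ∧ T i = G.hd i) := by
            rcases Bool.eq_false_or_eq_true (o₂ i) with hbo | hbo
            · left
              constructor <;> simp [hH, hT, MultiGraph.reorient, hbo]
            · right
              constructor <;> simp [hH, hT, MultiGraph.reorient, hbo]
          rcases hHT with ⟨ha, hb'⟩ | ⟨ha, hb'⟩ <;> rw [ha, hb']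
          · rw [hgeq]; ring
          · rw [hgeq]; ring
        · rw [hsupp i hiF hi.2]; ring
      have hfe : f ≠ e := fun hc => he (hc ▸ hjF)
      have hsum2 : ∑ i ∈ ({f, e} : Finset (Fin G.nE)), x i * (g (H i) - g (T i)) = 0 := by
        rw [Finset.sum_subset (Finset.subset_univ _) (fun i _ hi => hvan i hi)]
        exact key
      rw [Finset.sum_pair hfe] at hsum2
      have hHf : H f = pavv G st.anc f := by erw [h2hd f, if_pos hjF]
      have hTf : T f = chvv G st.anc f := by erw [h2tl f, if_pos hjF]
      have hHe : H e = chvv G st.anc e := by erw [h2hd e, if_neg he]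
      have hTe : T e = pavv G st.anc e := by erw [h2tl e, if_neg he]
      have hgch : g (chvv G st.anc f) = 1 := by
        simp only [hgdef]
        exact if_pos Relation.ReflTransGen.refl
      have hgpa : g (pavv G st.anc f) = 0 := by
        simp only [hgdef]
        refine if_neg fun hc => ?_
        exact st.nocyc f hjF (reachIn_symm G hc)
      rw [hHf, hTf, hHe, hTe, hgch, hgpa, hxe] at hsum2
      have hxf : x f = g (chvv G st.anc e) - g (pavv G st.anc e) := by linarith
      have hmono : G.ReachIn ↑(st.F.erase f) (pavv G st.anc e) (chvv G st.anc f) →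
          G.ReachIn ↑(st.F.erase f) (chvv G st.anc e) (chvv G st.anc f) := by
        intro h
        have ha1 := (st.desc f hjF _).mp h
        exact (st.desc f hjF _).mpr (st.atrans _ _ _ ha1 (anc_pav_chv G st e))
      by_cases hc1 : G.ReachIn ↑(st.F.erase f) (chvv G st.anc e) (chvv G st.anc f) <;>
        by_cases hc2 : G.ReachIn ↑(st.F.erase f) (pavv G st.anc e) (chvv G st.anc f)
      · left; rw [hxf]; simp only [hgdef]; rw [if_pos hc1, if_pos hc2]; ring
      · right; rw [hxf]; simp only [hgdef]; rw [if_pos hc1, if_neg hc2]; ring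
      · exact absurd (hmono hc2) hc1
      · left; rw [hxf]; simp only [hgdef]; rw [if_neg hc1, if_neg hc2]; ring

end Greene
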